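/- Let σ_X, σ_Z > 0, α = σ_X²/(σ_X²+σ_Z²), σ̃² = α σ_Z², λ > 0, N ≥ 2, and let τ*_N be a solution of λ((N−1)/N) E[Φ(((1−α)τ*_N − σ̃ W)/σ_Z)] = α τ*_N, where W ~ N(0,1) and Φ is the Gaussian CDF. Then 1/2 ≤ (σ_X²/(σ_X²+σ_Z²)) · τ*_N / (λ(N−1)/N) ≤ 1/2 + (σ_Z/σ_X²) · λ(N−1)/N. -/

import Mathlib

open MeasureTheory ProbabilityTheory
open scoped ENNReal NNReal

/-- The standard Gaussian CDF `Φ`. -/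
noncomputable def stdGaussianCDF (x : ℝ) : ℝ :=
  (gaussianReal 0 1 (Set.Iic x)).toReal

lemma gaussianPDF_le_one (x : ℝ) : gaussianPDF 0 1 x ≤ 1 := by
  rw [gaussianPDF]
  refine ENNReal.ofReal_le_one.mpr ?_
  rw [gaussianPDFReal]
  have h1 : (1 : ℝ) ≤ Real.sqrt (2 * Real.pi * (1:NNReal)) := by
    rw [show ((1:NNReal):ℝ) = (1:ℝ) by norm_num, mul_one]
    nlinarith [Real.sq_sqrt (by positivity : (0:ℝ) ≤ 2 * Real.pi), Real.pi_gt_three,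
      Real.sqrt_nonneg (2 * Real.pi)]
  have h2 : Real.exp (-(x - 0) ^ 2 / (2 * (1:NNReal))) ≤ 1 := by
    refine Real.exp_le_one_iff.mpr ?_
    have : ((1:NNReal):ℝ) = 1 := by norm_num
    rw [this]
    nlinarith [sq_nonneg (x - 0)]
  calc (Real.sqrt (2 * Real.pi * (1:NNReal)))⁻¹ * Real.exp (-(x - 0) ^ 2 / (2 * (1:NNReal)))
      ≤ 1 * 1 := by
        apply mul_le_mul _ h2 (Real.exp_nonneg _) zero_le_one
        exact inv_le_one_of_one_le₀ h1
    _ = 1 := by norm_num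

lemma gauss_le_volume (s : Set ℝ) : gaussianReal 0 1 s ≤ MeasureTheory.volume s := by
  rcases le_or_gt (MeasureTheory.volume s) (gaussianReal 0 1 s) with h | h
  · -- prove directly
    rw [gaussianReal_apply 0 one_ne_zero s]
    calc ∫⁻ x in s, gaussianPDF 0 1 x ≤ ∫⁻ _ in s, 1 :=
          lintegral_mono fun x => gaussianPDF_le_one x
      _ = MeasureTheory.volume s := setLIntegral_one s
  · exact h.le

lemma stdGaussianCDF_nonneg (x : ℝ) : 0 ≤ stdGaussianCDF x := ENNReal.toReal_nonneg

lemma stdGaussianCDF_le_one (x : ℝ) : stdGaussianCDF x ≤ 1 := by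
  rw [stdGaussianCDF]
  have := prob_le_one (μ := gaussianReal 0 1) (s := Set.Iic x)
  calc (gaussianReal 0 1 (Set.Iic x)).toReal ≤ (1 : ℝ≥0∞).toReal :=
        ENNReal.toReal_mono (by norm_num) this
    _ = 1 := by simp

lemma stdGaussianCDF_mono : Monotone stdGaussianCDF := by
  intro x y hxy
  exact ENNReal.toReal_mono (measure_ne_top _ _) (measure_mono (Set.Iic_subset_Iic.mpr hxy))

lemma stdGaussianCDF_measurable : Measurable stdGaussianCDF :=
  stdGaussianCDF_mono.measurable

lemma stdGaussianCDF_lipschitz {x y : ℝ} (h : x ≤ y) :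
    stdGaussianCDF y ≤ stdGaussianCDF x + (y - x) := by
  have hu : Set.Iic y = Set.Iic x ∪ Set.Ioc x y := by
    rw [Set.Iic_union_Ioc_eq_Iic h]
  have hd : Disjoint (Set.Iic x) (Set.Ioc x y) := by
    simp [Set.disjoint_left]
    intro a ha; exact fun h' => absurd ha (not_le.mpr h')
  have hμ : gaussianReal 0 1 (Set.Iic y)
      = gaussianReal 0 1 (Set.Iic x) + gaussianReal 0 1 (Set.Ioc x y) := by
    rw [hu, measure_union hd measurableSet_Ioc]
  have hIoc : (gaussianReal 0 1 (Set.Ioc x y)).toReal ≤ y - x := by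
    have h1 := gauss_le_volume (Set.Ioc x y)
    have h2 : MeasureTheory.volume (Set.Ioc x y) = ENNReal.ofReal (y - x) := by
      simp [Real.volume_Ioc]
    calc (gaussianReal 0 1 (Set.Ioc x y)).toReal
        ≤ (ENNReal.ofReal (y - x)).toReal :=
          ENNReal.toReal_mono (by simp) (h2 ▸ h1)
      _ = y - x := ENNReal.toReal_ofReal (by linarith)
  rw [stdGaussianCDF, stdGaussianCDF, hμ, ENNReal.toReal_add (measure_ne_top _ _) (measure_ne_top _ _)]
  linarith

lemma gauss_map_neg : (gaussianReal 0 1).map (fun w => -w) = gaussianReal 0 1 := by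
  have := gaussianReal_map_const_mul (μ := 0) (v := 1) (-1)
  simp only [neg_one_mul] at this
  rw [this]
  norm_num

lemma stdGaussianCDF_add_neg (x : ℝ) : stdGaussianCDF x + stdGaussianCDF (-x) = 1 := by
  have hIci : gaussianReal 0 1 (Set.Iic (-x)) = gaussianReal 0 1 (Set.Ici x) := by
    conv_lhs => rw [← gauss_map_neg]
    rw [Measure.map_apply measurable_neg measurableSet_Iic]
    congr 1
    ext w
    simp
  have hsum : gaussianReal 0 1 (Set.Iic x) + gaussianReal 0 1 (Set.Ici x) = 1 := by
    have h := measure_union_add_inter (μ := gaussianReal 0 1) (t := Set.Ici x) (Set.Iic x) measurableSet_Ici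
    rw [Set.Iic_union_Ici, Set.Iic_inter_Ici, Set.Icc_self] at h
    have hx : gaussianReal 0 1 {x} = 0 := by
      have := gauss_le_volume {x}
      simpa using le_antisymm (by simpa using this) zero_le
    rw [hx, add_zero] at h
    rw [← h, measure_univ]
  rw [stdGaussianCDF, stdGaussianCDF, hIci,
    ← ENNReal.toReal_add (measure_ne_top _ _) (measure_ne_top _ _), hsum]
  simp


lemma integrable_cdf_comp {f : ℝ → ℝ} (hf : Measurable f) :
    Integrable (fun w => stdGaussianCDF (f w)) (gaussianReal 0 1) := by
  refine (integrable_const (1:ℝ)).mono'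
    ((stdGaussianCDF_measurable.comp hf).aestronglyMeasurable) ?_
  refine Filter.Eventually.of_forall fun w => ?_
  rw [Real.norm_eq_abs, abs_of_nonneg (stdGaussianCDF_nonneg _)]
  exact stdGaussianCDF_le_one _

lemma integral_cdf_neg_mul (k : ℝ) :
    ∫ w, stdGaussianCDF (-(k * w)) ∂(gaussianReal 0 1) = 1/2 := by
  set I := ∫ w, stdGaussianCDF (-(k * w)) ∂(gaussianReal 0 1) with hI
  have hint1 : Integrable (fun w => stdGaussianCDF (-(k * w))) (gaussianReal 0 1) :=
    integrable_cdf_comp (by fun_prop)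
  have hint2 : Integrable (fun w => stdGaussianCDF (k * w)) (gaussianReal 0 1) :=
    integrable_cdf_comp (by fun_prop)
  have heq : ∫ w, stdGaussianCDF (k * w) ∂(gaussianReal 0 1) = I := by
    conv_lhs => rw [← gauss_map_neg]
    have hm : Measurable (fun w : ℝ => stdGaussianCDF (k * w)) :=
      stdGaussianCDF_measurable.comp (measurable_const.mul measurable_id)
    rw [integral_map measurable_neg.aemeasurable hm.aestronglyMeasurable]
    simp only [mul_neg, ← neg_mul, hI]
  have hsum : I + I = 1 := by
    nth_rewrite 2 [← heq]
    rw [hI, ← integral_add hint1 hint2]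
    have h1 : (fun w => stdGaussianCDF (-(k*w)) + stdGaussianCDF (k*w)) = fun _ => (1:ℝ) := by
      funext w
      have := stdGaussianCDF_add_neg (k*w)
      linarith
    rw [h1, integral_const]
    simp
  linarith

lemma integral_cdf_bounds (a k : ℝ) (ha : 0 ≤ a) :
    1/2 ≤ ∫ w, stdGaussianCDF (a - k * w) ∂(gaussianReal 0 1) ∧
    ∫ w, stdGaussianCDF (a - k * w) ∂(gaussianReal 0 1) ≤ 1/2 + a := by
  have hint : Integrable (fun w => stdGaussianCDF (a - k * w)) (gaussianReal 0 1) :=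
    integrable_cdf_comp (by fun_prop)
  have hint0 : Integrable (fun w => stdGaussianCDF (-(k * w))) (gaussianReal 0 1) :=
    integrable_cdf_comp (by fun_prop)
  have hlow : ∀ w, stdGaussianCDF (-(k*w)) ≤ stdGaussianCDF (a - k*w) :=
    fun w => stdGaussianCDF_mono (by linarith)
  have hup : ∀ w, stdGaussianCDF (a - k*w) ≤ stdGaussianCDF (-(k*w)) + a := by
    intro w
    have := stdGaussianCDF_lipschitz (x := -(k*w)) (y := a - k*w) (by linarith)
    linarith
  constructor
  · rw [← integral_cdf_neg_mul k]
    exact integral_mono hint0 hint hlow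
  · calc ∫ w, stdGaussianCDF (a - k*w) ∂(gaussianReal 0 1)
        ≤ ∫ w, (stdGaussianCDF (-(k*w)) + a) ∂(gaussianReal 0 1) :=
          integral_mono hint (hint0.add (integrable_const a)) hup
      _ = 1/2 + a := by
          rw [integral_add hint0 (integrable_const a), integral_cdf_neg_mul k, integral_const]
          simp

/-- If `τ*_N` solves `λ((N-1)/N) E[Φ(((1-α)τ*_N - σ̃W)/σ_Z)] = α τ*_N` with
`α = σX²/(σX²+σZ²)`, `σ̃² = α σZ²`, `W ~ N(0,1)`, `λ > 0`, `N ≥ 2`, then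
`1/2 ≤ α τ*_N/(λ(N-1)/N) ≤ 1/2 + (σ_Z/σX²) λ(N-1)/N`. -/
theorem stmt13 (σX σZ lam : ℝ) (hσX : 0 < σX) (hσZ : 0 < σZ) (hlam : 0 < lam)
    (N : ℕ) (hN : 2 ≤ N) (τs : ℝ)
    (hfix : lam * ((N - 1 : ℝ) / N) *
        ∫ w, stdGaussianCDF
            (((1 - σX ^ 2 / (σX ^ 2 + σZ ^ 2)) * τs
              - Real.sqrt ((σX ^ 2 / (σX ^ 2 + σZ ^ 2)) * σZ ^ 2) * w) / σZ)
          ∂(gaussianReal 0 1)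
      = (σX ^ 2 / (σX ^ 2 + σZ ^ 2)) * τs) :
    1 / 2 ≤ (σX ^ 2 / (σX ^ 2 + σZ ^ 2)) * τs / (lam * ((N - 1 : ℝ) / N)) ∧
    (σX ^ 2 / (σX ^ 2 + σZ ^ 2)) * τs / (lam * ((N - 1 : ℝ) / N))
      ≤ 1 / 2 + (σZ / σX ^ 2) * (lam * ((N - 1 : ℝ) / N)) := by
  have hS : (0:ℝ) < σX ^ 2 + σZ ^ 2 := by positivity
  set α : ℝ := σX ^ 2 / (σX ^ 2 + σZ ^ 2) with hα
  have hα0 : 0 < α := by positivity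
  have hα1 : α < 1 := by
    rw [hα, div_lt_one hS]
    nlinarith
  set st : ℝ := Real.sqrt (α * σZ ^ 2) with hst
  set L : ℝ := lam * ((N - 1 : ℝ) / N) with hL
  have hN2 : (2:ℝ) ≤ (N:ℝ) := by exact_mod_cast hN
  have hL0 : 0 < L := by
    apply mul_pos hlam
    apply div_pos <;> linarith
  set a : ℝ := (1 - α) * τs / σZ with ha
  set k : ℝ := st / σZ with hk
  have hrw : (fun w => stdGaussianCDF (((1 - α) * τs - st * w) / σZ))
      = fun w => stdGaussianCDF (a - k * w) := by
    funext w
    congr 1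
    field_simp [ha, hk]
    rw [ha, hk]
    field_simp
  set I : ℝ := ∫ w, stdGaussianCDF (((1 - α) * τs - st * w) / σZ) ∂(gaussianReal 0 1) with hI
  have hfix' : L * I = α * τs := hfix
  have hInn : 0 ≤ I := integral_nonneg fun w => stdGaussianCDF_nonneg _
  have hτs : 0 ≤ τs := by nlinarith
  have ha0 : 0 ≤ a := by
    rw [ha]
    apply div_nonneg _ hσZ.le
    nlinarith
  have hIb : 1/2 ≤ I ∧ I ≤ 1/2 + a := by
    rw [hI, hrw]
    exact integral_cdf_bounds a k ha0
  have hI1 : I ≤ 1 := by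
    rw [hI]
    calc ∫ w, stdGaussianCDF (((1 - α) * τs - st * w) / σZ) ∂(gaussianReal 0 1)
        ≤ ∫ _, (1:ℝ) ∂(gaussianReal 0 1) :=
          integral_mono (hrw ▸ integrable_cdf_comp (f := fun w => a - k * w) (by fun_prop))
            (integrable_const 1) (fun w => stdGaussianCDF_le_one _)
      _ = 1 := by simp
  have hdiv : α * τs / L = I := by
    rw [← hfix']
    field_simp
  rw [hdiv]
  refine ⟨hIb.1, hIb.2.trans ?_⟩
  have hτL : α * τs ≤ L := by nlinarith
  have key : a ≤ σZ / σX ^ 2 * L := by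
    rw [ha]
    rw [div_le_iff₀ hσZ]
    have h1 : (1 - α) = σZ ^ 2 / (σX ^ 2 + σZ ^ 2) := by
      rw [hα]; field_simp
      ring
    have h2 : τs ≤ L / α := by
      rw [le_div_iff₀ hα0]; linarith [hτL]
    calc (1 - α) * τs ≤ (1 - α) * (L / α) := by
          apply mul_le_mul_of_nonneg_left h2 (by linarith)
      _ = σZ / σX ^ 2 * L * σZ := by
          rw [h1, hα]
          field_simp
  linarith
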